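/- For a simple matroid M with lattice of flats L = Lat(M), the rank of M equals the height of L, which equals the maximal number of superboolean-independent rows of the complemented structure matrix of L. -/

import Mathlib

open scoped Classical

/-- The superboolean semiring `SB = {0, 1, 1^ν}`. -/
def SB := Fin 3

instance : DecidableEq SB := inferInstanceAs (DecidableEq (Fin 3))
instance : Fintype SB := inferInstanceAs (Fintype (Fin 3))

def SB.zero : SB := (0 : Fin 3)
def SB.one : SB := (1 : Fin 3)
/-- The ghost element `1^ν`. -/
def SB.nu : SB := (2 : Fin 3)

def SB.val (a : SB) : ℕ := Fin.val a

instance : Zero SB := ⟨SB.zero⟩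
instance : One SB := ⟨SB.one⟩

def SB.add (a b : SB) : SB := (⟨min (a.val + b.val) 2, by omega⟩ : Fin 3)
def SB.mul (a b : SB) : SB := (⟨min (a.val * b.val) 2, by omega⟩ : Fin 3)

instance : Add SB := ⟨SB.add⟩
instance : Mul SB := ⟨SB.mul⟩

instance : AddCommMonoid SB where
  add := (· + ·)
  add_assoc := by decide
  zero_add := by decide
  add_zero := by decide
  add_comm := by decide
  nsmul := nsmulRec

instance : CommMonoid SB where
  mul := (· * ·)
  mul_assoc := by decide
  one_mul := by decide
  mul_one := by decide
  mul_comm := by decide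
  npow := npowRec

/-- The permanent of a square superboolean matrix. -/
def sbPer {n : ℕ} (A : Matrix (Fin n) (Fin n) SB) : SB :=
  ∑ π : Equiv.Perm (Fin n), ∏ i, A (π i) i

/-- A square superboolean matrix is nonsingular when its permanent is `1`. -/
def Nonsingular {n : ℕ} (A : Matrix (Fin n) (Fin n) SB) : Prop := sbPer A = SB.one

/-- Membership in the ghost ideal `{0, 1^ν}`. -/
def SB.IsGhost (a : SB) : Prop := a = SB.zero ∨ a = SB.nu

/-- A family of superboolean vectors is dependent if some nontrivial boolean
combination of them lies entirely in the ghost ideal. -/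
def SBDep {κ ι : Type*} [Fintype κ] (v : κ → ι → SB) : Prop :=
  ∃ α : κ → SB, (∀ k, α k = SB.zero ∨ α k = SB.one) ∧ (∃ k, α k ≠ SB.zero) ∧
    ∀ j : ι, SB.IsGhost (∑ k, α k * v k j)

/-- Independence of a family of superboolean vectors. -/
def SBIndep {κ ι : Type*} [Fintype κ] (v : κ → ι → SB) : Prop := ¬ SBDep v

/-- A matrix is boolean if none of its entries is the ghost `1^ν`. -/
def IsBooleanMat {ι κ : Type*} (A : Matrix ι κ SB) : Prop := ∀ i j, A i j ≠ SB.nu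
/-- A matroid in the sense of Whitney: a nonempty hereditary collection of
independent sets satisfying the exchange axiom. -/
structure PaperMatroid (E : Type*) [Fintype E] where
  Indep : Set E → Prop
  exists_indep : ∃ X, Indep X
  indep_subset : ∀ ⦃X Y : Set E⦄, X ⊆ Y → Indep Y → Indep X
  exchange : ∀ ⦃X Y : Set E⦄, Indep X → Indep Y → Y.ncard = X.ncard + 1 →
    ∃ y ∈ Y \ X, Indep (insert y X)

namespace PaperMatroid

variable {E : Type*} [Fintype E] (M : PaperMatroid E)

/-- A circuit: a minimal dependent set. -/
def Circuit (C : Set E) : Prop := ¬ M.Indep C ∧ ∀ D ⊂ C, M.Indep D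

/-- The closure of `X`: `X` together with all `y` for which some circuit
contained in `X ∪ {y}` contains `y`. -/
def cl (X : Set E) : Set E :=
  X ∪ {y | y ∉ X ∧ ∃ C, M.Circuit C ∧ C ⊆ insert y X ∧ y ∈ C}

/-- A flat (closed set). -/
def Flat (F : Set E) : Prop := M.cl F = F

/-- A simple matroid: every subset of size at most `2` is independent. -/
def Simple : Prop := ∀ X : Set E, X.ncard ≤ 2 → M.Indep X

/-- A basis: a maximal independent set. -/
def Basis (B : Set E) : Prop :=
  M.Indep B ∧ ∀ X : Set E, M.Indep X → B ⊆ X → X = B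

/-- The lattice of flats of `M`, ordered by inclusion. -/
abbrev Flats := {F : Set E // M.Flat F}

end PaperMatroid

/-- The complemented structure matrix of the lattice of flats of `M`:
entry `(F, G)` is `1` iff `F ⊄ G`, and `0` iff `F ⊆ G`. -/
noncomputable def AcM {E : Type*} [Fintype E] (M : PaperMatroid E) :
    Matrix M.Flats M.Flats SB :=
  fun F G => if F.1 ⊆ G.1 then SB.zero else SB.one


/-! ### Auxiliary lemmas about `SB` -/

lemma SB.zero_mul' : ∀ a : SB, SB.zero * a = SB.zero := by decide

lemma SB.one_mul' : ∀ a : SB, SB.one * a = a := by decide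

lemma SB.add_eq_zero : ∀ a b : SB, a + b = SB.zero → a = SB.zero ∧ b = SB.zero := by decide

lemma SB.add_eq_one : ∀ a b : SB,
    a + b = SB.one → (a = SB.one ∧ b = SB.zero) ∨ (a = SB.zero ∧ b = SB.one) := by decide

lemma SB.trichotomy : ∀ a : SB, a = SB.zero ∨ a = SB.one ∨ a = SB.nu := by decide

lemma SB.one_not_ghost : ¬ SB.IsGhost SB.one := by
  rintro (h | h) <;> exact absurd h (by decide)

lemma SB.not_ghost_eq_one (a : SB) (h : ¬ a.IsGhost) : a = SB.one := by
  rcases SB.trichotomy a with h0 | h1 | h2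
  · exact absurd (Or.inl h0) h
  · exact h1
  · exact absurd (Or.inr h2) h

lemma sbsum_eq_zero {ι : Type*} (s : Finset ι) (f : ι → SB)
    (hb : ∀ i ∈ s, f i = SB.zero ∨ f i = SB.one)
    (h : ∑ i ∈ s, f i = SB.zero) : ∀ i ∈ s, f i = SB.zero := by
  classical
  induction s using Finset.induction_on with
  | empty => intro i hi; exact absurd hi (Finset.notMem_empty i)
  | insert _ _ hns ih =>
    rename_i a s
    rw [Finset.sum_insert hns] at h
    obtain ⟨ha, hs⟩ := SB.add_eq_zero _ _ h
    intro i hi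
    rcases Finset.mem_insert.1 hi with rfl | hi
    · exact ha
    · exact ih (fun j hj => hb j (Finset.mem_insert_of_mem hj)) hs i hi

lemma sbsum_eq_one {ι : Type*} (s : Finset ι) (f : ι → SB)
    (hb : ∀ i ∈ s, f i = SB.zero ∨ f i = SB.one)
    (h : ∑ i ∈ s, f i = SB.one) :
    ∃ i ∈ s, f i = SB.one ∧ ∀ j ∈ s, j ≠ i → f j = SB.zero := by
  classical
  induction s using Finset.induction_on with
  | empty => simp at h; exact absurd h (by decide)
  | insert _ _ hns ih =>
    rename_i a s
    rw [Finset.sum_insert hns] at h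
    rcases SB.add_eq_one _ _ h with ⟨ha, hs⟩ | ⟨ha, hs⟩
    · refine ⟨a, Finset.mem_insert_self a s, ha, ?_⟩
      intro j hj hja
      rcases Finset.mem_insert.1 hj with rfl | hj
      · exact absurd rfl hja
      · exact sbsum_eq_zero s f (fun i hi => hb i (Finset.mem_insert_of_mem hi)) hs j hj
    · obtain ⟨i, his, hi1, hirest⟩ := ih (fun j hj => hb j (Finset.mem_insert_of_mem hj)) hs
      refine ⟨i, Finset.mem_insert_of_mem his, hi1, ?_⟩
      intro j hj hji
      rcases Finset.mem_insert.1 hj with rfl | hj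
      · exact ha
      · exact hirest j hj hji

/-- A subfamily of an `SB`-independent family of vectors is independent. -/
lemma SBIndep.comp {k m : ℕ} {ι : Type*} {v : Fin m → ι → SB} (h : SBIndep v)
    (e : Fin k → Fin m) (he : Function.Injective e) : SBIndep (fun i => v (e i)) := by
  rintro ⟨α, hbool, ⟨k₁, hk₁⟩, hgh⟩
  classical
  set β : Fin m → SB := fun j => if hj : ∃ i, e i = j then α hj.choose else SB.zero with hβ
  have hβe : ∀ i, β (e i) = α i := by
    intro i
    have hx : ∃ i', e i' = e i := ⟨i, rfl⟩
    have := he hx.choose_spec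
    rw [hβ]; simp only [dif_pos hx, this]
  have hβ0 : ∀ j, (¬ ∃ i, e i = j) → β j = SB.zero := by
    intro j hj
    rw [hβ]; exact dif_neg hj
  refine h ⟨β, ?_, ⟨e k₁, by rw [hβe]; exact hk₁⟩, ?_⟩
  · intro j
    by_cases hj : ∃ i, e i = j
    · obtain ⟨i, rfl⟩ := hj
      rw [hβe]; exact hbool _
    · rw [hβ0 j hj]; exact Or.inl rfl
  · intro j
    have key : (∑ t, β t * v t j) = ∑ i, α i * v (e i) j := by
      have h1 : ∑ t ∈ Finset.univ.image e, β t * v t j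
          = ∑ i ∈ Finset.univ, β (e i) * v (e i) j :=
        Finset.sum_image (fun a _ b _ hab => he hab)
      have h2 : ∑ t ∈ Finset.univ.image e, β t * v t j = ∑ t, β t * v t j := by
        apply Finset.sum_subset (Finset.subset_univ _)
        intro t _ ht
        have hne : ¬ ∃ i, e i = t := by
          intro ⟨i, hi⟩; exact ht (Finset.mem_image.2 ⟨i, Finset.mem_univ i, hi⟩)
        rw [hβ0 t hne]
        exact SB.zero_mul' _
      rw [← h2, h1]
      apply Finset.sum_congr rfl
      intro i _
      rw [hβe]
    rw [key]
    exact hgh j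

/-! ### Auxiliary matroid lemmas -/

namespace PaperMatroid

variable {E : Type*} [Fintype E] (M : PaperMatroid E)

lemma indep_empty : M.Indep ∅ := by
  obtain ⟨X, hX⟩ := M.exists_indep
  exact M.indep_subset (Set.empty_subset X) hX

lemma exists_circuit_subset_aux :
    ∀ (n : ℕ) (D : Set E), D.ncard ≤ n → ¬ M.Indep D → ∃ C, C ⊆ D ∧ M.Circuit C := by
  intro n
  induction n with
  | zero =>
    intro D hle hdep
    have : D = ∅ := (Set.ncard_eq_zero (Set.toFinite D)).1 (Nat.le_zero.1 hle)
    exact absurd (this ▸ M.indep_empty) hdep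
  | succ n ih =>
    intro D hle hdep
    by_cases hall : ∀ D' ⊂ D, M.Indep D'
    · exact ⟨D, subset_rfl, hdep, hall⟩
    · push_neg at hall
      obtain ⟨D', hsub, hdep'⟩ := hall
      have hlt : D'.ncard < D.ncard := Set.ncard_lt_ncard hsub (Set.toFinite D)
      obtain ⟨C, hC1, hC2⟩ := ih D' (by omega) hdep'
      exact ⟨C, hC1.trans hsub.subset, hC2⟩

lemma exists_circuit_subset {D : Set E} (hdep : ¬ M.Indep D) : ∃ C, C ⊆ D ∧ M.Circuit C :=
  M.exists_circuit_subset_aux D.ncard D le_rfl hdep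

lemma mem_cl_iff {X : Set E} {y : E} :
    y ∈ M.cl X ↔ y ∈ X ∨ (y ∉ X ∧ ∃ C, M.Circuit C ∧ C ⊆ insert y X ∧ y ∈ C) := Iff.rfl

lemma subset_cl (X : Set E) : X ⊆ M.cl X := Set.subset_union_left

lemma cl_mono {X Y : Set E} (h : X ⊆ Y) : M.cl X ⊆ M.cl Y := by
  intro y hy
  rcases (M.mem_cl_iff).1 hy with hy | ⟨hyX, C, hC, hCs, hyC⟩
  · exact (M.mem_cl_iff).2 (Or.inl (h hy))
  · by_cases hyY : y ∈ Y
    · exact (M.mem_cl_iff).2 (Or.inl hyY)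
    · exact (M.mem_cl_iff).2 (Or.inr ⟨hyY, C, hC, hCs.trans (Set.insert_subset_insert h), hyC⟩)

lemma not_mem_cl_of_indep_insert {X : Set E} {y : E} (hins : M.Indep (insert y X))
    (hy : y ∉ X) : y ∉ M.cl X := by
  intro h
  rcases (M.mem_cl_iff).1 h with h | ⟨_, C, hC, hCs, _⟩
  · exact hy h
  · exact hC.1 (M.indep_subset hCs hins)

lemma mem_cl_of_insert_dep {B : Set E} {y : E} (hB : M.Indep B) (hy : y ∉ B)
    (hdep : ¬ M.Indep (insert y B)) : y ∈ M.cl B := by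
  obtain ⟨C, hCs, hC⟩ := M.exists_circuit_subset hdep
  have hyC : y ∈ C := by
    by_contra hyC
    have hCB : C ⊆ B := fun x hx => (hCs hx).resolve_left (fun h => hyC (h ▸ hx))
    exact hC.1 (M.indep_subset hCB hB)
  exact (M.mem_cl_iff).2 (Or.inr ⟨hy, C, hC, hCs, hyC⟩)

/-- `B` is a maximum-cardinality independent subset of `X`. -/
def MaxIn (X B : Set E) : Prop :=
  B ⊆ X ∧ M.Indep B ∧ ∀ I, I ⊆ X → M.Indep I → I.ncard ≤ B.ncard

lemma exists_max_between {I X : Set E} (hI : M.Indep I) (hIX : I ⊆ X) :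
    ∃ B, I ⊆ B ∧ B ⊆ X ∧ M.Indep B ∧ ∀ y ∈ X, y ∉ B → ¬ M.Indep (insert y B) := by
  set T : Set ℕ := {n | ∃ J, I ⊆ J ∧ J ⊆ X ∧ M.Indep J ∧ J.ncard = n} with hT
  have hTne : I.ncard ∈ T := ⟨I, subset_rfl, hIX, hI, rfl⟩
  have hTbdd : BddAbove T := by
    refine ⟨Fintype.card E, ?_⟩
    rintro n ⟨J, _, _, _, rfl⟩
    calc J.ncard ≤ (Set.univ : Set E).ncard :=
          Set.ncard_le_ncard (Set.subset_univ J) (Set.toFinite _)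
      _ = Fintype.card E := by rw [Set.ncard_univ, Nat.card_eq_fintype_card]
  obtain ⟨J, hIJ, hJX, hJind, hJcard⟩ := Nat.sSup_mem ⟨_, hTne⟩ hTbdd
  refine ⟨J, hIJ, hJX, hJind, ?_⟩
  intro y hyX hyJ hins
  have hmem : (insert y J).ncard ∈ T :=
    ⟨insert y J, hIJ.trans (Set.subset_insert y J), Set.insert_subset hyX hJX, hins, rfl⟩
  have hle := le_csSup hTbdd hmem
  rw [Set.ncard_insert_of_notMem hyJ (Set.toFinite _), hJcard] at hle
  omega

lemma ncard_le_of_weakmax {X B : Set E} (hBX : B ⊆ X) (hB : M.Indep B)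
    (hmax : ∀ y ∈ X, y ∉ B → ¬ M.Indep (insert y B)) :
    ∀ I, I ⊆ X → M.Indep I → I.ncard ≤ B.ncard := by
  intro I hIX hI
  by_contra h
  push_neg at h
  obtain ⟨I', hI'I, hI'card⟩ := Set.exists_subset_card_eq (show B.ncard + 1 ≤ I.ncard by omega)
  obtain ⟨y, hy, hins⟩ := M.exchange hB (M.indep_subset hI'I hI) hI'card
  exact hmax y (hIX (hI'I hy.1)) hy.2 hins

lemma exists_maxIn (X : Set E) : ∃ B, M.MaxIn X B := by
  obtain ⟨B, _, hBX, hBind, hmax⟩ := M.exists_max_between M.indep_empty (Set.empty_subset X)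
  exact ⟨B, hBX, hBind, M.ncard_le_of_weakmax hBX hBind hmax⟩

lemma maxIn_not_indep_insert {X B : Set E} {y : E} (hB : M.MaxIn X B) (hy : y ∈ M.cl X)
    (hyB : y ∉ B) : ¬ M.Indep (insert y B) := by
  obtain ⟨hBX, hBind, hmax⟩ := hB
  by_cases hyX : y ∈ X
  · intro hins
    have h1 := hmax _ (Set.insert_subset hyX hBX) hins
    rw [Set.ncard_insert_of_notMem hyB (Set.toFinite _)] at h1
    omega
  · rcases (M.mem_cl_iff).1 hy with h | ⟨_, C, hC, hCs, hyC⟩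
    · exact absurd h hyX
    · have hCy_ind : M.Indep (C \ {y}) := hC.2 _ (Set.sdiff_singleton_ssubset.2 hyC)
      have hCyX : C \ {y} ⊆ X := by
        intro x hx
        exact (hCs hx.1).resolve_left (fun h => hx.2 (by simp [h]))
      obtain ⟨B', hCB', hB'X, hB'ind, hB'max⟩ := M.exists_max_between hCy_ind hCyX
      have hcard : B'.ncard = B.ncard :=
        le_antisymm (hmax _ hB'X hB'ind)
          (M.ncard_le_of_weakmax hB'X hB'ind hB'max _ hBX hBind)
      intro hins
      have hyB' : y ∉ B' := fun h => hyX (hB'X h)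
      have hcard2 : (insert y B).ncard = B'.ncard + 1 := by
        rw [Set.ncard_insert_of_notMem hyB (Set.toFinite _), hcard]
      obtain ⟨z, hz, hzins⟩ := M.exchange hB'ind hins hcard2
      rcases Set.mem_insert_iff.1 hz.1 with rfl | hzB
      · have hCsub : C ⊆ insert z B' := by
          intro x hx
          by_cases hxy : x = z
          · exact hxy ▸ Set.mem_insert _ _
          · exact Set.mem_insert_of_mem _ (hCB' ⟨hx, by simp [hxy]⟩)
        exact hC.1 (M.indep_subset hCsub hzins)
      · exact hB'max z (hBX hzB) hz.2 hzins

lemma maxIn_cl {X B : Set E} (hB : M.MaxIn X B) : M.MaxIn (M.cl X) B :=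
  ⟨hB.1.trans (M.subset_cl X), hB.2.1,
    M.ncard_le_of_weakmax (hB.1.trans (M.subset_cl X)) hB.2.1
      (fun y hy hyB => M.maxIn_not_indep_insert hB hy hyB)⟩

lemma flat_cl (X : Set E) : M.Flat (M.cl X) := by
  apply Set.Subset.antisymm _ (M.subset_cl _)
  intro y hy
  by_cases hmem : y ∈ M.cl X
  · exact hmem
  · have hyX : y ∉ X := fun h => hmem (M.subset_cl X h)
    obtain ⟨B, hB⟩ := M.exists_maxIn X
    have hyB : y ∉ B := fun h => hyX (hB.1 h)
    have hdep := M.maxIn_not_indep_insert (M.maxIn_cl hB) hy hyB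
    exact M.cl_mono hB.1 (M.mem_cl_of_insert_dep hB.2.1 hyB hdep)

lemma flat_inter {F G : Set E} (hF : M.Flat F) (hG : M.Flat G) : M.Flat (F ∩ G) := by
  apply Set.Subset.antisymm
  · apply Set.subset_inter
    · exact (M.cl_mono Set.inter_subset_left).trans (le_of_eq hF)
    · exact (M.cl_mono Set.inter_subset_right).trans (le_of_eq hG)
  · exact M.subset_cl _

lemma flat_univ : M.Flat (Set.univ : Set E) :=
  Set.Subset.antisymm (Set.subset_univ _) (M.subset_cl _)

/-- The rank of a set: the size of a maximum independent subset. -/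
noncomputable def rk (X : Set E) : ℕ := (M.exists_maxIn X).choose.ncard

lemma rk_spec (X : Set E) : M.MaxIn X (M.exists_maxIn X).choose :=
  (M.exists_maxIn X).choose_spec

lemma rk_le {I X : Set E} (hIX : I ⊆ X) (hI : M.Indep I) : I.ncard ≤ M.rk X :=
  (M.rk_spec X).2.2 I hIX hI

lemma rk_mono {X Y : Set E} (h : X ⊆ Y) : M.rk X ≤ M.rk Y :=
  M.rk_le ((M.rk_spec X).1.trans h) (M.rk_spec X).2.1

lemma rk_lt {F G : Set E} (hF : M.Flat F) (hFG : F ⊆ G) (x : E) (hxG : x ∈ G)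
    (hxF : x ∉ F) : M.rk F < M.rk G := by
  set B := (M.exists_maxIn F).choose with hBdef
  have hB : M.MaxIn F B := M.rk_spec F
  have hxB : x ∉ B := fun h => hxF (hB.1 h)
  have hins : M.Indep (insert x B) := by
    by_contra hdep
    exact hxF (hF ▸ M.cl_mono hB.1 (M.mem_cl_of_insert_dep hB.2.1 hxB hdep))
  have h1 : (insert x B).ncard ≤ M.rk G :=
    M.rk_le (Set.insert_subset hxG (hB.1.trans hFG)) hins
  rw [Set.ncard_insert_of_notMem hxB (Set.toFinite _)] at h1
  have : M.rk F = B.ncard := rfl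
  omega

/-- Key upper bound: `SB`-independent families of rows of `AcM` inside a flat `H`
are bounded by the rank of `H`. -/
lemma le_rk_of_sbindep :
    ∀ (k : ℕ) (F : Fin k → M.Flats) (H : Set E), M.Flat H → (∀ i, (F i).1 ⊆ H) →
    SBIndep (fun i (G : M.Flats) => AcM M (F i) G) → k ≤ M.rk H := by
  intro k
  induction k with
  | zero => intro _ _ _ _ _; exact Nat.zero_le _
  | succ k ih =>
    intro F H hH hsub hind
    -- apply independence to the all-ones combination
    have hex : ∃ G : M.Flats, ¬ SB.IsGhost (∑ i, SB.one * AcM M (F i) G) := by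
      by_contra h
      push_neg at h
      have hone : SB.one ≠ SB.zero := by decide
      exact hind ⟨fun _ => SB.one, fun _ => Or.inr rfl, ⟨0, hone⟩, h⟩
    obtain ⟨G, hG⟩ := hex
    have hsum1 : (∑ i, SB.one * AcM M (F i) G) = SB.one := SB.not_ghost_eq_one _ hG
    have hbool : ∀ i ∈ Finset.univ, SB.one * AcM M (F i) G = SB.zero ∨
        SB.one * AcM M (F i) G = SB.one := by
      intro i _
      rw [SB.one_mul']
      by_cases h : (F i).1 ⊆ G.1
      · exact Or.inl (by simp [AcM, h])
      · exact Or.inr (by simp [AcM, h])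
    obtain ⟨i0, _, hi0, hrest⟩ := sbsum_eq_one Finset.univ _ hbool hsum1
    rw [SB.one_mul'] at hi0
    have hnotsub : ¬ (F i0).1 ⊆ G.1 := by
      intro h
      rw [AcM, if_pos h] at hi0
      exact absurd hi0 (by decide)
    have hsubs : ∀ j, j ≠ i0 → (F j).1 ⊆ G.1 := by
      intro j hj
      have := hrest j (Finset.mem_univ j) hj
      rw [SB.one_mul'] at this
      by_contra h
      rw [AcM, if_neg h] at this
      exact absurd this (by decide)
    set K : Set E := G.1 ∩ H with hK
    have hKflat : M.Flat K := M.flat_inter G.2 hH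
    have hsub' : ∀ i, (F (i0.succAbove i)).1 ⊆ K := fun i =>
      Set.subset_inter (hsubs _ (Fin.succAbove_ne i0 i)) (hsub _)
    have hind' : SBIndep (fun i (G' : M.Flats) => AcM M (F (i0.succAbove i)) G') :=
      SBIndep.comp hind i0.succAbove (Fin.succAbove_right_injective)
    have hIH := ih (fun i => F (i0.succAbove i)) K hKflat hsub' hind'
    obtain ⟨x, hxF, hxG⟩ := Set.not_subset.1 hnotsub
    have hlt : M.rk K < M.rk H :=
      M.rk_lt hKflat Set.inter_subset_right x (hsub i0 hxF) (fun hxK => hxG hxK.1)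
    omega

end PaperMatroid

/-- For a simple matroid `M` with flat lattice `L`, the rank of `M`, the height of `L`,
and the maximal number of independent rows of the complemented structure matrix of `L`
all coincide. -/
theorem rank_eq_height_eq_nook {E : Type*} [Fintype E] (M : PaperMatroid E)
    (hs : M.Simple) :
    ∃ r : ℕ,
      IsGreatest {n : ℕ | ∃ X : Set E, M.Indep X ∧ X.ncard = n} r ∧
      IsGreatest {n : ℕ | ∃ c : Fin (n + 1) → M.Flats, StrictMono c} r ∧
      IsGreatest {k : ℕ | ∃ w : Fin k → M.Flats, Function.Injective w ∧
        SBIndep (fun i (G : M.Flats) => AcM M (w i) G)} r := by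
  classical
  set r : ℕ := M.rk Set.univ with hr
  set Bu : Set E := (M.exists_maxIn Set.univ).choose with hBu
  have hBuspec : M.MaxIn Set.univ Bu := M.rk_spec Set.univ
  have hrBu : r = Bu.ncard := rfl
  -- an injective enumeration of Bu
  have hcard : Bu.toFinset.card = r := by
    rw [hrBu, Set.ncard_eq_toFinset_card']
  set b : Fin r → E := fun i => (Bu.toFinset.equivFin.symm (Fin.cast hcard.symm i)).1 with hb
  have hb_inj : Function.Injective b := by
    intro i j hij
    have := Subtype.val_injective hij
    have := Bu.toFinset.equivFin.symm.injective this
    exact Fin.cast_injective _ this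
  have hb_mem : ∀ i, b i ∈ Bu := by
    intro i
    have := (Bu.toFinset.equivFin.symm (Fin.cast hcard.symm i)).2
    exact Set.mem_toFinset.1 this
  -- the prefix sets
  set Sn : ℕ → Set E := fun n => b '' {j : Fin r | (j : ℕ) < n} with hSn
  have hSnBu : ∀ n, Sn n ⊆ Bu := by
    rintro n x ⟨j, _, rfl⟩; exact hb_mem j
  -- the chain of flats
  set c : Fin (r + 1) → M.Flats := fun i => ⟨M.cl (Sn i), M.flat_cl _⟩ with hc
  have hstrict : StrictMono c := by
    intro i j hij
    have hjr : (i : ℕ) < r := lt_of_lt_of_le hij (Nat.lt_succ_iff.1 j.2)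
    set x : E := b ⟨(i : ℕ), hjr⟩ with hx
    have hxSj : x ∈ Sn j := ⟨⟨(i : ℕ), hjr⟩, hij, rfl⟩
    have hxclj : x ∈ M.cl (Sn j) := M.subset_cl _ hxSj
    have hxSi : x ∉ Sn i := by
      rintro ⟨jj, hjj, hjjx⟩
      have h1 : (jj : ℕ) < (i : ℕ) := hjj
      have h2 : (jj : ℕ) = (i : ℕ) := by rw [hb_inj hjjx]
      omega
    have hxcli : x ∉ M.cl (Sn i) := by
      apply M.not_mem_cl_of_indep_insert _ hxSi
      apply M.indep_subset (Set.insert_subset (hb_mem _) (hSnBu _)) hBuspec.2.1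
    have hsub : M.cl (Sn i) ⊆ M.cl (Sn j) := by
      apply M.cl_mono
      apply Set.image_mono
      intro t ht
      have h1 : (t : ℕ) < (i : ℕ) := ht
      have h2 : (i : ℕ) < (j : ℕ) := hij
      show (t : ℕ) < (j : ℕ)
      omega
    have : M.cl (Sn i) ⊂ M.cl (Sn j) :=
      hsub.ssubset_of_ne (fun heq => hxcli (by rw [heq]; exact hxclj))
    exact Subtype.mk_lt_mk.2 this
  refine ⟨r, ⟨⟨Bu, hBuspec.2.1, hrBu.symm⟩, ?_⟩, ⟨⟨c, hstrict⟩, ?_⟩, ⟨?_, ?_⟩⟩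
  · -- rank upper bound
    rintro n ⟨X, hX, rfl⟩
    exact hBuspec.2.2 X (Set.subset_univ X) hX
  · -- height upper bound
    rintro n ⟨d, hd⟩
    set f : Fin (n + 1) → ℕ := fun i => M.rk (d i).1 with hf
    have hfs : ∀ i j : Fin (n + 1), i < j → f i < f j := by
      intro i j hij
      have hlt : (d i).1 ⊂ (d j).1 := hd hij
      obtain ⟨x, hxj, hxi⟩ := Set.exists_of_ssubset hlt
      exact M.rk_lt (d i).2 hlt.subset x hxj hxi
    have key : ∀ m : ℕ, ∀ hm : m < n + 1, m + f 0 ≤ f ⟨m, hm⟩ := by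
      intro m
      induction m with
      | zero => intro hm; simp
      | succ p ihp =>
        intro hm
        have h1 := ihp (by omega)
        have h2 : f ⟨p, by omega⟩ < f ⟨p + 1, hm⟩ := hfs _ _ (by simp [Fin.mk_lt_mk])
        omega
    have h1 := key n (by omega)
    have h2 : f ⟨n, by omega⟩ ≤ r := M.rk_mono (Set.subset_univ _)
    omega
  · -- nook (SB-independence) lower bound: the chain rows are independent
    refine ⟨fun i : Fin r => c i.succ, ?_, ?_⟩
    · exact fun i j h => Fin.succ_injective _ (hstrict.injective h)
    · rintro ⟨α, hbool, ⟨k₁, hk₁⟩, hghost⟩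
      have hα1 : α k₁ = SB.one := (hbool k₁).resolve_left hk₁
      set T : Finset (Fin r) := Finset.univ.filter (fun k => α k = SB.one) with hT
      have hne : T.Nonempty := ⟨k₁, by simp [hT, hα1]⟩
      set k0 : Fin r := T.max' hne with hk0
      have hk0T : α k0 = SB.one := by
        have h1 := T.max'_mem hne
        have h2 : k0 ∈ Finset.filter (fun k => α k = SB.one) Finset.univ := h1
        exact (Finset.mem_filter.1 h2).2
      set G : M.Flats := c k0.castSucc with hG
      have hterm : ∀ b' : Fin r, b' ≠ k0 → α b' * AcM M (c b'.succ) G = 0 := by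
        intro b' hb'
        rcases hbool b' with h0 | h1
        · rw [h0]; exact SB.zero_mul' _
        · have hb'T : b' ∈ T := by simp [hT, h1]
          have hble : b' ≤ k0 := T.le_max' b' hb'T
          have hblt : b' < k0 := lt_of_le_of_ne hble hb'
          have hle : b'.succ ≤ k0.castSucc := by
            rw [Fin.le_def]
            simp only [Fin.val_succ, Fin.coe_castSucc]
            exact hblt
          have hsub : (c b'.succ).1 ⊆ G.1 := hstrict.monotone hle
          rw [h1, AcM, if_pos hsub]
          decide
      have hmain : α k0 * AcM M (c k0.succ) G = SB.one := by
        have hnsub : ¬ (c k0.succ).1 ⊆ G.1 := by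
          intro hsub
          have hlt : G < c k0.succ := hstrict (Fin.castSucc_lt_succ (i := k0))
          have hle : c k0.succ ≤ G := Subtype.mk_le_mk.2 hsub
          exact absurd (lt_of_lt_of_le hlt hle) (lt_irrefl _)
        rw [hk0T, AcM, if_neg hnsub]
        decide
      have hsum : (∑ k, α k * AcM M (c k.succ) G) = SB.one := by
        rw [Finset.sum_eq_single k0 (fun b' _ hb' => hterm b' hb')
          (fun h => absurd (Finset.mem_univ k0) h)]
        exact hmain
      have := hghost G
      rw [hsum] at this
      exact SB.one_not_ghost this
  · -- nook upper bound
    rintro k ⟨w, _, hwind⟩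
    exact M.le_rk_of_sbindep k w Set.univ M.flat_univ (fun i => Set.subset_univ _) hwind
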